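/- arXiv:math/0501004 — 2 statements merged into one kernel-verified Lean document; each statement's English description precedes it below -/
import Mathlib

section
/- For every integer t ≥ 1 and every ε with 0 < ε < 1, there exists p₀ = p₀(t, ε) such that for every prime p > p₀ and every set of residues {b₁, …, b_t} ⊆ ℤ/pℤ, there exists a weight function μ : ℤ/pℤ → [0,1] satisfying: (i) μ̂(0) = 1 (equivalently, 𝔼(μ) = p⁻¹); (ii) |μ̂(b_i) − 1| < ε² for all i = 1, …, t; and (iii) Σ_{a ∈ ℤ/pℤ} |μ̂(a)| ≤ (6/ε)^t. -/
set_option linter.unusedSectionVars false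
set_option linter.unusedVariables false
set_option linter.unnecessarySimpa false
open Finset Complex
/-- Fourier transform on `ℤ/N`: `f̂(a) = ∑_{n ∈ ℤ/N} f(n) e^{2πi a n / N}`. -/
noncomputable def ft (N : ℕ) (f : ZMod N → ℂ) (a : ZMod N) : ℂ :=
  ∑ n ∈ Finset.range N,
    f n * Complex.exp (2 * Real.pi * Complex.I * (a.val : ℂ) * (n : ℂ) / (N : ℂ))

/-- Fourier transform of a real-valued function. -/
noncomputable def ftR (N : ℕ) (f : ZMod N → ℝ) (a : ZMod N) : ℂ :=
  ft N (fun n => (f n : ℂ)) a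

namespace FlatAux
variable {p : ℕ} [NeZero p]

noncomputable abbrev ψ (p : ℕ) [NeZero p] : AddChar (ZMod p) ℂ := ZMod.stdAddChar





lemma psi_apply (m : ZMod p) :
    ψ p m = Complex.exp (((2 * Real.pi * (m.val : ℝ) / p : ℝ) : ℂ) * Complex.I) := by
  rw [ψ, ZMod.stdAddChar_apply, ZMod.toCircle_apply]
  congr 1
  push_cast
  ring

lemma psi_abs (m : ZMod p) : ‖ψ p m‖ = 1 := by
  rw [ψ, ZMod.stdAddChar_apply]
  exact Circle.norm_coe _

lemma psi_conj (m : ZMod p) : (starRingEnd ℂ) (ψ p m) = ψ p (-m) := by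
  have h1 : ψ p m * ψ p (-m) = 1 := by
    rw [← AddChar.map_add_eq_mul, add_neg_cancel, AddChar.map_zero_eq_one]
  have h2 : ψ p m * (starRingEnd ℂ) (ψ p m) = 1 := by
    rw [Complex.mul_conj]
    norm_cast
    rw [← Complex.sq_norm, psi_abs]; norm_num
  have h3 : ψ p m ≠ 0 := by
    intro h
    rw [h, zero_mul] at h1; exact one_ne_zero h1.symm
  rw [← h2] at h1
  exact (mul_left_cancel₀ h3 h1.symm)

lemma psi_sum_mul (d : ZMod p) :
    ∑ n : ZMod p, ψ p (d * n) = if d = 0 then (p : ℂ) else 0 := by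
  split_ifs with h
  · simp [h, ZMod.card]
  · exact AddChar.sum_eq_zero_of_ne_one (ZMod.isPrimitive_stdAddChar p h)

lemma psi_prod {ι : Type*} (s : Finset ι) (f : ι → ZMod p) :
    ψ p (∑ i ∈ s, f i) = ∏ i ∈ s, ψ p (f i) := by
  induction s using Finset.cons_induction with
  | empty => simp
  | cons a s ha ih => rw [Finset.sum_cons, Finset.prod_cons, AddChar.map_add_eq_mul, ih]



lemma sum_range_zmod {M : Type*} [AddCommMonoid M] (F : ZMod p → M) :
    ∑ n ∈ Finset.range p, F (n : ZMod p) = ∑ m : ZMod p, F m := by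
  refine Finset.sum_nbij' (fun n => (n : ZMod p)) (fun m => m.val) ?_ ?_ ?_ ?_ ?_
  · intro a ha; exact Finset.mem_univ _
  · intro a ha; exact Finset.mem_range.2 (ZMod.val_lt a)
  · intro a ha; exact ZMod.val_cast_of_lt (Finset.mem_range.1 ha)
  · intro a ha; exact ZMod.natCast_zmod_val a
  · intro a ha; rfl

lemma psi_apply' (m : ZMod p) :
    ψ p m = Complex.exp (2 * Real.pi * Complex.I * (m.val : ℂ) / p) := by
  rw [ψ, ZMod.stdAddChar_apply, ZMod.toCircle_apply]

lemma exp_bridge (a : ZMod p) (n : ℕ) (hn : n < p) :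
    Complex.exp (2 * Real.pi * Complex.I * (a.val : ℂ) * (n : ℂ) / (p : ℂ))
      = ψ p (a * (n : ZMod p)) := by
  rw [psi_apply']
  have hval : a.val * n = (a * (n : ZMod p)).val + p * (a.val * n / p) := by
    rw [ZMod.val_mul, ZMod.val_natCast_of_lt hn]
    exact (Nat.mod_add_div _ _).symm
  have hp : (p : ℂ) ≠ 0 := Nat.cast_ne_zero.2 (NeZero.ne p)
  have hvalC : ((a.val : ℂ)) * n = ((a * (n : ZMod p)).val : ℂ) + (p : ℂ) * ((a.val * n / p : ℕ) : ℂ) := by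
    exact_mod_cast congrArg (Nat.cast : ℕ → ℂ) hval
  have : 2 * (Real.pi : ℂ) * Complex.I * (a.val : ℂ) * (n : ℂ) / (p : ℂ)
      = 2 * (Real.pi : ℂ) * Complex.I * ((a * (n : ZMod p)).val : ℂ) / p
        + ((a.val * n / p : ℕ) : ℂ) * (2 * (Real.pi : ℂ) * Complex.I) := by
    rw [div_eq_iff hp, add_mul, div_mul_cancel₀ _ hp]
    linear_combination (2 * (Real.pi : ℂ) * Complex.I) * hvalC
  rw [this, Complex.exp_add]
  have h1 : Complex.exp (((a.val * n / p : ℕ) : ℂ) * (2 * (Real.pi:ℂ) * Complex.I)) = 1 := by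
    have := Complex.exp_int_mul_two_pi_mul_I ((a.val * n / p : ℕ) : ℤ)
    simpa using this
  rw [h1, mul_one]

lemma ft_eq_char_sum (f : ZMod p → ℂ) (a : ZMod p) :
    (∑ n ∈ Finset.range p,
      f n * Complex.exp (2 * Real.pi * Complex.I * (a.val : ℂ) * (n : ℂ) / (p : ℂ)))
      = ∑ m : ZMod p, f m * ψ p (a * m) := by
  rw [← sum_range_zmod (fun m : ZMod p => f m * ψ p (a * m))]
  refine Finset.sum_congr rfl fun n hn => ?_
  rw [exp_bridge a n (Finset.mem_range.1 hn)]



noncomputable def g (p K : ℕ) (x : ZMod p) : ℝ := if x.val < K then 1 else 0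

noncomputable def w (p K : ℕ) [NeZero p] (m : ZMod p) : ℝ :=
  ∑ x : ZMod p, g p K x * g p K (x + m)

noncomputable def nu (p K : ℕ) [NeZero p] {t : ℕ} (b : Fin t → ZMod p) (n : ZMod p) : ℝ :=
  ∏ i, w p K (b i * n)

noncomputable def G (p K : ℕ) [NeZero p] (c : ZMod p) : ℂ :=
  ∑ x : ZMod p, (g p K x : ℂ) * ψ p (c * x)

noncomputable def R (p K : ℕ) [NeZero p] {t : ℕ} (b : Fin t → ZMod p) (a : ZMod p) : ℝ :=
  (1 / (p : ℝ)) ^ t * ∑ c : Fin t → ZMod p,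
    (∏ i, Complex.normSq (G p K (c i))) * (if (∑ i, c i * b i) = a then (p : ℝ) else 0)

lemma g_nonneg (K : ℕ) (x : ZMod p) : 0 ≤ g p K x := by
  rw [g]; split_ifs <;> norm_num

lemma w_nonneg (K : ℕ) (m : ZMod p) : 0 ≤ w p K m :=
  Finset.sum_nonneg fun x _ => mul_nonneg (g_nonneg K x) (g_nonneg K _)

lemma nu_nonneg (K : ℕ) {t : ℕ} (b : Fin t → ZMod p) (n : ZMod p) : 0 ≤ nu p K b n :=
  Finset.prod_nonneg fun i _ => w_nonneg K _

lemma sum_g (K : ℕ) (hK : K ≤ p) : ∑ x : ZMod p, g p K x = K := by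
  rw [← sum_range_zmod (fun x : ZMod p => g p K x)]
  have : ∀ n ∈ Finset.range p, g p K (n : ZMod p) = if n < K then (1 : ℝ) else 0 := by
    intro n hn
    rw [g, ZMod.val_natCast_of_lt (Finset.mem_range.1 hn)]
  rw [Finset.sum_congr rfl this, Finset.sum_boole]
  have hf : Finset.filter (fun n => n < K) (Finset.range p) = Finset.range K := by
    ext n; simp only [Finset.mem_filter, Finset.mem_range]; omega
  simp [hf]

lemma w_zero (K : ℕ) (hK : K ≤ p) : w p K 0 = K := by
  rw [w, ← sum_g (p := p) K hK]
  refine Finset.sum_congr rfl fun x _ => ?_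
  rw [add_zero, g]
  split_ifs <;> norm_num

lemma nu_zero (K : ℕ) {t : ℕ} (b : Fin t → ZMod p) (hK : K ≤ p) :
    nu p K b 0 = (K : ℝ) ^ t := by
  rw [nu]
  have : ∀ i : Fin t, w p K (b i * 0) = (K : ℝ) := fun i => by
    rw [mul_zero, w_zero K hK]
  rw [Finset.prod_congr rfl fun i _ => this i, Finset.prod_const, Finset.card_univ,
    Fintype.card_fin]

lemma G_zero (K : ℕ) (hK : K ≤ p) : G p K 0 = ((K : ℝ) : ℂ) := by
  rw [G]
  have : ∀ x : ZMod p, (g p K x : ℂ) * ψ p (0 * x) = (g p K x : ℂ) := by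
    intro x; rw [zero_mul, AddChar.map_zero_eq_one, mul_one]
  rw [Finset.sum_congr rfl fun x _ => this x, ← Complex.ofReal_sum, sum_g K hK]


lemma W_eq (K : ℕ) (c : ZMod p) :
    ∑ m : ZMod p, (w p K m : ℂ) * ψ p (c * m) = ((Complex.normSq (G p K c) : ℝ) : ℂ) := by
  have step1 : ∑ m : ZMod p, (w p K m : ℂ) * ψ p (c * m)
      = ∑ m : ZMod p, ∑ x : ZMod p, ((g p K x : ℂ) * (g p K (x + m) : ℂ)) * ψ p (c * m) := by
    refine Finset.sum_congr rfl fun m _ => ?_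
    rw [w]
    push_cast
    rw [Finset.sum_mul]
  rw [step1, Finset.sum_comm]
  have step2 : ∀ x : ZMod p,
      ∑ m : ZMod p, ((g p K x : ℂ) * (g p K (x + m) : ℂ)) * ψ p (c * m)
      = ((g p K x : ℂ) * ψ p (-(c * x))) * ∑ y : ZMod p, (g p K y : ℂ) * ψ p (c * y) := by
    intro x
    rw [Finset.mul_sum]
    refine Fintype.sum_equiv (Equiv.addLeft x) _ _ fun m => ?_
    simp only [Equiv.coe_addLeft]
    have h : ψ p (-(c * x)) * ψ p (c * (x + m)) = ψ p (c * m) := by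
      rw [← AddChar.map_add_eq_mul]
      congr 1
      ring
    rw [← h]; ring
  rw [Finset.sum_congr rfl fun x _ => step2 x, ← Finset.sum_mul]
  have step3 : ∑ x : ZMod p, (g p K x : ℂ) * ψ p (-(c * x))
      = (starRingEnd ℂ) (G p K c) := by
    rw [G, map_sum]
    refine Finset.sum_congr rfl fun x _ => ?_
    rw [map_mul, Complex.conj_ofReal, psi_conj]
  rw [step3, ← G]
  rw [mul_comm, Complex.mul_conj]

lemma w_inv (K : ℕ) (m : ZMod p) :
    (w p K m : ℂ) = (1 / (p : ℂ)) * ∑ c : ZMod p,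
      ((Complex.normSq (G p K c) : ℝ) : ℂ) * ψ p (-(c * m)) := by
  have hp : (p : ℂ) ≠ 0 := Nat.cast_ne_zero.2 (NeZero.ne p)
  have expand : ∑ c : ZMod p, ((Complex.normSq (G p K c) : ℝ) : ℂ) * ψ p (-(c * m))
      = ∑ c : ZMod p, (∑ m' : ZMod p, (w p K m' : ℂ) * ψ p (c * m')) * ψ p (-(c * m)) := by
    refine Finset.sum_congr rfl fun c _ => ?_
    rw [W_eq]
  rw [expand]
  have swap : ∑ c : ZMod p, (∑ m' : ZMod p, (w p K m' : ℂ) * ψ p (c * m')) * ψ p (-(c * m))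
      = ∑ m' : ZMod p, (w p K m' : ℂ) * ∑ c : ZMod p, ψ p ((m' - m) * c) := by
    simp only [Finset.sum_mul]
    rw [Finset.sum_comm]
    refine Finset.sum_congr rfl fun m' _ => ?_
    rw [Finset.mul_sum]
    refine Finset.sum_congr rfl fun c _ => ?_
    rw [mul_assoc, ← AddChar.map_add_eq_mul]
    congr 2
    ring
  rw [swap]
  have inner : ∀ m' : ZMod p, ∑ c : ZMod p, ψ p ((m' - m) * c)
      = if m' - m = 0 then (p : ℂ) else 0 := fun m' => psi_sum_mul (m' - m)
  rw [Finset.sum_congr rfl fun m' _ => by rw [inner m']]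
  have : ∑ m' : ZMod p, (w p K m' : ℂ) * (if m' - m = 0 then (p : ℂ) else 0)
      = (w p K m : ℂ) * p := by
    rw [Finset.sum_eq_single m]
    · simp
    · intro m' _ hne
      rw [if_neg (by simpa [sub_eq_zero] using hne), mul_zero]
    · intro h; exact absurd (Finset.mem_univ m) h
  rw [this]
  field_simp

lemma master (K : ℕ) {t : ℕ} (b : Fin t → ZMod p) (a : ZMod p) :
    ∑ n : ZMod p, (nu p K b n : ℂ) * ψ p (a * n) = ((R p K b a : ℝ) : ℂ) := by
  have step1 : ∀ n : ZMod p, (nu p K b n : ℂ) * ψ p (a * n)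
      = (1 / (p : ℂ)) ^ t * ∑ σ : Fin t → ZMod p,
          ((∏ i, ((Complex.normSq (G p K (σ i)) : ℝ) : ℂ)) *
            (ψ p (a * n) * ∏ i, ψ p (-(σ i * (b i * n))))) := by
    intro n
    have h1 : (nu p K b n : ℂ) = ∏ i, (w p K (b i * n) : ℂ) := by
      rw [nu]; push_cast; rfl
    rw [h1]
    have h2 : ∀ i : Fin t, (w p K (b i * n) : ℂ)
        = (1 / (p : ℂ)) * ∑ c : ZMod p,
            ((Complex.normSq (G p K c) : ℝ) : ℂ) * ψ p (-(c * (b i * n))) :=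
      fun i => w_inv K _
    rw [Finset.prod_congr rfl fun i _ => h2 i, Finset.prod_mul_distrib, Finset.prod_const,
      Finset.card_univ, Fintype.card_fin, Finset.prod_univ_sum]
    simp only [Fintype.piFinset_univ]
    rw [mul_assoc, Finset.sum_mul]
    congr 1
    refine Finset.sum_congr rfl fun σ _ => ?_
    rw [Finset.prod_mul_distrib]
    ring
  rw [Finset.sum_congr rfl fun n _ => step1 n, ← Finset.mul_sum, Finset.sum_comm]
  have step3 : ∀ σ : Fin t → ZMod p, ∑ n : ZMod p,
      ((∏ i, ((Complex.normSq (G p K (σ i)) : ℝ) : ℂ)) *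
        (ψ p (a * n) * ∏ i, ψ p (-(σ i * (b i * n)))))
      = (∏ i, ((Complex.normSq (G p K (σ i)) : ℝ) : ℂ)) *
          (if (∑ i, σ i * b i) = a then (p : ℂ) else 0) := by
    intro σ
    rw [← Finset.mul_sum]
    congr 1
    have h4 : ∀ n : ZMod p, ψ p (a * n) * ∏ i, ψ p (-(σ i * (b i * n)))
        = ψ p ((a - ∑ i, σ i * b i) * n) := by
      intro n
      rw [← psi_prod, ← AddChar.map_add_eq_mul]
      congr 1
      have h5 : ∑ i, -(σ i * (b i * n)) = -((∑ i, σ i * b i) * n) := by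
        rw [Finset.sum_mul, ← Finset.sum_neg_distrib]
        exact Finset.sum_congr rfl fun i _ => by ring
      rw [h5]; ring
    rw [Finset.sum_congr rfl fun n _ => h4 n, psi_sum_mul]
    exact if_congr (by rw [sub_eq_zero, eq_comm]) rfl rfl
  rw [Finset.sum_congr rfl fun σ _ => step3 σ, R]
  push_cast [apply_ite (fun x : ℝ => (x : ℂ))]
  norm_num

lemma R_nonneg (K : ℕ) {t : ℕ} (b : Fin t → ZMod p) (a : ZMod p) : 0 ≤ R p K b a := by
  rw [R]
  refine mul_nonneg (pow_nonneg (by positivity) _) (Finset.sum_nonneg fun σ _ => ?_)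
  refine mul_nonneg (Finset.prod_nonneg fun i _ => Complex.normSq_nonneg _) ?_
  split_ifs <;> positivity

lemma sum_nu_eq_R_zero (K : ℕ) {t : ℕ} (b : Fin t → ZMod p) :
    ∑ n : ZMod p, nu p K b n = R p K b 0 := by
  have h := master (p := p) K b 0
  have h2 : ∑ n : ZMod p, (nu p K b n : ℂ) * ψ p (0 * n) = ((∑ n : ZMod p, nu p K b n : ℝ) : ℂ) := by
    push_cast
    refine Finset.sum_congr rfl fun n _ => ?_
    rw [zero_mul, AddChar.map_zero_eq_one, mul_one]
  rw [h2] at h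
  exact_mod_cast h

lemma R_zero_ge (K : ℕ) (hK : K ≤ p) {t : ℕ} (b : Fin t → ZMod p) :
    (1 / (p : ℝ)) ^ t * ((K : ℝ) ^ 2) ^ t * p ≤ R p K b 0 := by
  rw [R, mul_assoc]
  refine mul_le_mul_of_nonneg_left ?_ (pow_nonneg (by positivity) _)
  have hterm : ((K : ℝ) ^ 2) ^ t * (p : ℝ)
      = (∏ i : Fin t, Complex.normSq (G p K (((0 : Fin t → ZMod p)) i))) *
        (if (∑ i : Fin t, (0 : Fin t → ZMod p) i * b i) = (0 : ZMod p) then (p : ℝ) else 0) := by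
    have hG : ∀ i : Fin t, Complex.normSq (G p K ((0 : Fin t → ZMod p) i)) = (K : ℝ) ^ 2 := by
      intro i
      show Complex.normSq (G p K 0) = (K : ℝ) ^ 2
      rw [G_zero K hK, Complex.normSq_ofReal]
      ring
    rw [Finset.prod_congr rfl fun i _ => hG i, Finset.prod_const, Finset.card_univ,
      Fintype.card_fin, if_pos (by simp)]
  rw [hterm]
  refine Finset.single_le_sum (f := fun σ : Fin t → ZMod p =>
    (∏ i, Complex.normSq (G p K (σ i))) * (if (∑ i, σ i * b i) = (0 : ZMod p) then (p : ℝ) else 0))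
    (fun σ _ => ?_) (Finset.mem_univ 0)
  refine mul_nonneg (Finset.prod_nonneg fun i _ => Complex.normSq_nonneg _) ?_
  split_ifs <;> positivity

lemma sum_R (K : ℕ) (hK : K ≤ p) {t : ℕ} (b : Fin t → ZMod p) :
    ∑ a : ZMod p, R p K b a = (p : ℝ) * (K : ℝ) ^ t := by
  have hC : ∑ a : ZMod p, ((R p K b a : ℝ) : ℂ) = (p : ℂ) * ((K : ℝ) : ℂ) ^ t := by
    rw [Finset.sum_congr rfl fun a _ => (master (p := p) K b a).symm, Finset.sum_comm]
    have hinner : ∀ n : ZMod p, ∑ a : ZMod p, (nu p K b n : ℂ) * ψ p (a * n)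
        = (nu p K b n : ℂ) * (if n = 0 then (p : ℂ) else 0) := by
      intro n
      rw [← Finset.mul_sum]
      congr 1
      rw [Finset.sum_congr rfl fun a _ => by rw [mul_comm a n], psi_sum_mul n]
    rw [Finset.sum_congr rfl fun n _ => hinner n, Finset.sum_eq_single (0 : ZMod p)]
    · rw [if_pos rfl, nu_zero K b hK]
      push_cast
      ring
    · intro n _ hn; rw [if_neg hn, mul_zero]
    · intro h; exact absurd (Finset.mem_univ _) h
  have := hC
  push_cast at this
  exact_mod_cast this

lemma R_re_formula (K : ℕ) {t : ℕ} (b : Fin t → ZMod p) (a : ZMod p) :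
    R p K b a = ∑ n : ZMod p, nu p K b n *
      Real.cos (2 * Real.pi * (((a * n).val : ℝ)) / p) := by
  have h := congrArg Complex.re (master (p := p) K b a)
  rw [Complex.ofReal_re] at h
  rw [← h, Complex.re_sum]
  refine Finset.sum_congr rfl fun n _ => ?_
  rw [psi_apply, Complex.re_ofReal_mul, Complex.exp_ofReal_mul_I_re]

lemma one_sub_cos_le (y : ℝ) : 1 - Real.cos y ≤ y ^ 2 / 2 := by
  have h1 := Real.cos_two_mul (y / 2)
  have h2 := Real.sin_sq_add_cos_sq (y / 2)
  have h3 := Real.sin_sq_le_sq (x := y / 2)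
  have h4 : 2 * (y / 2) = y := by ring
  rw [h4] at h1
  nlinarith

lemma cos_bound_aux (K : ℕ) (P : ℝ) (hP : 0 < P) (u : ℝ) (h0 : 0 ≤ u) (hK : u ≤ (K : ℝ)) :
    1 - Real.cos (2 * Real.pi * u / P) ≤ 2 * Real.pi ^ 2 * (K : ℝ) ^ 2 / P ^ 2 := by
  have h1 := one_sub_cos_le (2 * Real.pi * u / P)
  have h2 : (2 * Real.pi * u / P) ^ 2 / 2 ≤ 2 * Real.pi ^ 2 * (K : ℝ) ^ 2 / P ^ 2 := by
    rw [div_pow, div_div]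
    rw [div_le_div_iff₀ (by positivity) (by positivity)]
    have hu2 : u ^ 2 ≤ (K : ℝ) ^ 2 := pow_le_pow_left₀ h0 hK 2
    nlinarith [Real.pi_pos, sq_nonneg P,
      mul_le_mul_of_nonneg_left hu2 (by positivity : (0:ℝ) ≤ 4 * Real.pi ^ 2 * P ^ 2)]
  linarith

lemma w_ne_zero_val (K : ℕ) (m : ZMod p) (h : w p K m ≠ 0) :
    m.val < K ∨ p - m.val < K := by
  rw [w] at h
  obtain ⟨x, -, hx⟩ := Finset.exists_ne_zero_of_sum_ne_zero h
  have h1 : x.val < K := by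
    by_contra hc
    exact hx (by rw [g, if_neg hc, zero_mul])
  have h2 : (x + m).val < K := by
    by_contra hc
    exact hx (by rw [g, g, if_neg hc, mul_zero])
  have hadd := ZMod.val_add x m
  have hvx : x.val < p := ZMod.val_lt x
  have hvm : m.val < p := ZMod.val_lt m
  rcases Nat.lt_or_ge (x.val + m.val) p with hlt | hge
  · rw [Nat.mod_eq_of_lt hlt] at hadd
    left; omega
  · have hmod : (x.val + m.val) % p = x.val + m.val - p := by
      rw [Nat.mod_eq_sub_mod hge, Nat.mod_eq_of_lt (by omega)]
    rw [hmod] at hadd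
    right; omega

lemma nu_flat (K : ℕ) {t : ℕ} (b : Fin t → ZMod p) (j : Fin t) (n : ZMod p)
    (h : nu p K b n ≠ 0) :
    1 - Real.cos (2 * Real.pi * (((b j * n).val : ℝ)) / p)
      ≤ 2 * Real.pi ^ 2 * (K : ℝ) ^ 2 / (p : ℝ) ^ 2 := by
  have hp : 0 < (p : ℝ) := by
    have := NeZero.pos p
    exact_mod_cast this
  have hw : w p K (b j * n) ≠ 0 := by
    intro h0
    exact h (by rw [nu]; exact Finset.prod_eq_zero (Finset.mem_univ j) h0)
  have hval := w_ne_zero_val K _ hw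
  have hvp : (b j * n).val < p := ZMod.val_lt _
  rcases hval with hcase | hcase
  · exact cos_bound_aux K _ hp _ (by positivity) (by exact_mod_cast le_of_lt hcase)
  · rw [← Real.cos_two_pi_sub,
      show 2 * Real.pi - 2 * Real.pi * (((b j * n).val : ℝ)) / p
        = 2 * Real.pi * (((p : ℝ) - ((b j * n).val : ℝ))) / p by field_simp]
    refine cos_bound_aux K _ hp _ ?_ ?_
    · have : ((b j * n).val : ℝ) ≤ p := by exact_mod_cast le_of_lt hvp
      linarith
    · have hc : ((p - (b j * n).val : ℕ) : ℝ) < (K : ℝ) := by exact_mod_cast hcase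
      rw [Nat.cast_sub (le_of_lt hvp)] at hc
      linarith

lemma arith_flat (ε P KK : ℝ) (hε : 0 < ε) (hP : 0 < P) (h400 : 400 < ε * P)
    (hK : KK ≤ ε * P / 6 + 1) (hK0 : 0 ≤ KK) :
    2 * Real.pi ^ 2 * KK ^ 2 < ε ^ 2 * P ^ 2 := by
  have hpi2 : Real.pi ^ 2 < 10 := by nlinarith [Real.pi_lt_d2, Real.pi_pos]
  have hK2 : KK ^ 2 ≤ (ε * P / 6 + 1) ^ 2 := by nlinarith
  have h2 : 2 * Real.pi ^ 2 * KK ^ 2 < 20 * (ε * P / 6 + 1) ^ 2 := by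
    nlinarith [mul_le_mul_of_nonneg_left hK2 (by positivity : (0:ℝ) ≤ 2 * Real.pi ^ 2),
      mul_lt_mul_of_pos_right hpi2 (by positivity : (0:ℝ) < (ε * P / 6 + 1) ^ 2)]
  have h3 : 20 * (ε * P / 6 + 1) ^ 2 < ε ^ 2 * P ^ 2 := by
    nlinarith [sq_nonneg (ε * P - 400), h400, mul_pos hε hP]
  linarith

end FlatAux

open FlatAux in
theorem flattening_weight_exists (t : ℕ) (ht : 1 ≤ t) (ε : ℝ) (hε : 0 < ε) (hε1 : ε < 1) :
    ∃ p₀ : ℕ, ∀ p : ℕ, p.Prime → p₀ < p → ∀ b : Fin t → ZMod p,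
      ∃ μ : ZMod p → ℝ,
        (∀ n, μ n ∈ Set.Icc (0 : ℝ) 1) ∧
        ftR p μ 0 = 1 ∧
        (∀ i : Fin t, ‖ftR p μ (b i) - 1‖ < ε ^ 2) ∧
        (∑ a ∈ Finset.range p, ‖ftR p μ (a : ZMod p)‖) ≤ (6 / ε) ^ t := by
  refine ⟨⌈(400 : ℝ) / ε⌉₊ + 1, fun p hp hpgt b => ?_⟩
  haveI : NeZero p := ⟨hp.pos.ne'⟩
  have hpR : (0 : ℝ) < p := by exact_mod_cast hp.pos
  have hp400 : 400 < ε * p := by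
    have h1 : (400 : ℝ) / ε ≤ ⌈(400 : ℝ) / ε⌉₊ := Nat.le_ceil _
    have h2' : ⌈(400 : ℝ) / ε⌉₊ + 1 ≤ p := le_of_lt hpgt
    have h2 : ((⌈(400 : ℝ) / ε⌉₊ + 1 : ℕ) : ℝ) ≤ p := by exact_mod_cast h2'
    have h3 : (400 : ℝ) / ε < p := by push_cast at h2; linarith
    calc (400 : ℝ) = 400 / ε * ε := by field_simp
    _ < p * ε := by
        apply mul_lt_mul_of_pos_right h3 hε
    _ = ε * p := by ring
  set K : ℕ := ⌊ε * p / 6⌋₊ + 1 with hKdef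
  have hK6 : ε * p / 6 < (K : ℝ) := by
    have := Nat.lt_floor_add_one (ε * p / 6)
    push_cast
    exact_mod_cast this
  have hK6' : (K : ℝ) ≤ ε * p / 6 + 1 := by
    have := Nat.floor_le (by positivity : (0:ℝ) ≤ ε * p / 6)
    rw [hKdef]
    push_cast
    linarith
  have hKpos : (0 : ℝ) < K := lt_trans (by positivity) hK6
  have hpbig : (400 : ℝ) < p := by nlinarith
  have hKltp : (K : ℝ) < p := by nlinarith
  have hKp : K ≤ p := le_of_lt (by exact_mod_cast hKltp)
  set S : ℝ := ∑ n : ZMod p, nu p K b n with hSdef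
  have hSR : S = R p K b 0 := sum_nu_eq_R_zero K b
  have hSlb : (1 / (p : ℝ)) ^ t * ((K : ℝ) ^ 2) ^ t * p ≤ S := by
    rw [hSR]; exact R_zero_ge K hKp b
  have hDpos : (0 : ℝ) < (1 / (p : ℝ)) ^ t * ((K : ℝ) ^ 2) ^ t * p := by positivity
  have hSpos : (0 : ℝ) < S := lt_of_lt_of_le hDpos hSlb
  have hbridge : ∀ a : ZMod p, ftR p (fun n => nu p K b n / S) a
      = ((R p K b a / S : ℝ) : ℂ) := by
    intro a
    rw [ftR, ft, ft_eq_char_sum (fun m => ((nu p K b m / S : ℝ) : ℂ)) a]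
    have h1 : ∀ m : ZMod p, ((nu p K b m / S : ℝ) : ℂ) * ψ p (a * m)
        = ((nu p K b m : ℝ) : ℂ) * ψ p (a * m) / (S : ℂ) := by
      intro m; push_cast; ring
    rw [Finset.sum_congr rfl fun m _ => h1 m, ← Finset.sum_div, master K b a]
    push_cast
    ring
  refine ⟨fun n => nu p K b n / S, ?_, ?_, ?_, ?_⟩
  · intro n
    constructor
    · exact div_nonneg (nu_nonneg K b n) (le_of_lt hSpos)
    · rw [div_le_one hSpos]
      exact Finset.single_le_sum (fun m _ => nu_nonneg K b m) (Finset.mem_univ n)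
  · rw [hbridge 0, ← hSR, div_self hSpos.ne']
    norm_num
  · intro i
    rw [hbridge (b i)]
    set x : ℝ := R p K b (b i) / S with hxdef
    have hsum1 : ∑ n : ZMod p, nu p K b n / S = 1 := by
      rw [← Finset.sum_div, ← hSdef, div_self hSpos.ne']
    have hxcos := R_re_formula (p := p) K b (b i)
    have h1x : 1 - x = ∑ n : ZMod p, (nu p K b n / S) *
        (1 - Real.cos (2 * Real.pi * (((b i * n).val : ℝ)) / p)) := by
      have e1 : ∑ n : ZMod p, (nu p K b n / S) *
          (1 - Real.cos (2 * Real.pi * (((b i * n).val : ℝ)) / p))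
          = (∑ n : ZMod p, nu p K b n / S)
            - (∑ n : ZMod p, nu p K b n * Real.cos (2 * Real.pi * (((b i * n).val : ℝ)) / p)) / S := by
        rw [Finset.sum_div (f := fun n : ZMod p => nu p K b n * Real.cos (2 * Real.pi * (((b i * n).val : ℝ)) / p)), ← Finset.sum_sub_distrib]
        refine Finset.sum_congr rfl fun n _ => ?_
        ring
      rw [e1, hsum1, hxdef, ← hxcos]
    have hub : 1 - x ≤ 2 * Real.pi ^ 2 * (K : ℝ) ^ 2 / (p : ℝ) ^ 2 := by
      rw [h1x]
      calc ∑ n : ZMod p, (nu p K b n / S) *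
            (1 - Real.cos (2 * Real.pi * (((b i * n).val : ℝ)) / p))
          ≤ ∑ n : ZMod p, (nu p K b n / S) * (2 * Real.pi ^ 2 * (K : ℝ) ^ 2 / (p : ℝ) ^ 2) := by
            refine Finset.sum_le_sum fun n _ => ?_
            by_cases hnu : nu p K b n = 0
            · simp [hnu]
            · exact mul_le_mul_of_nonneg_left (nu_flat K b i n hnu)
                (div_nonneg (nu_nonneg K b n) hSpos.le)
        _ = 2 * Real.pi ^ 2 * (K : ℝ) ^ 2 / (p : ℝ) ^ 2 := by
            rw [← Finset.sum_mul, hsum1, one_mul]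
    have hlb : 0 ≤ 1 - x := by
      rw [h1x]
      refine Finset.sum_nonneg fun n _ => mul_nonneg
        (div_nonneg (nu_nonneg K b n) hSpos.le) ?_
      have := Real.cos_le_one (2 * Real.pi * (((b i * n).val : ℝ)) / p)
      linarith
    have hMe : 2 * Real.pi ^ 2 * (K : ℝ) ^ 2 / (p : ℝ) ^ 2 < ε ^ 2 := by
      rw [div_lt_iff₀ (by positivity)]
      have harith := arith_flat ε p K hε hpR hp400 hK6' hKpos.le
      linarith
    have hcast : ((x : ℝ) : ℂ) - 1 = ((x - 1 : ℝ) : ℂ) := by push_cast; ring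
    rw [hcast, Complex.norm_real, Real.norm_eq_abs, abs_sub_comm, _root_.abs_of_nonneg hlb]
    linarith
  · have hre : ∑ a ∈ Finset.range p,
        ‖ftR p (fun n => nu p K b n / S) (a : ZMod p)‖
        = ∑ a : ZMod p, ‖ftR p (fun n => nu p K b n / S) a‖ :=
      sum_range_zmod (fun a : ZMod p => ‖ftR p (fun n => nu p K b n / S) a‖)
    rw [hre]
    have habs : ∀ a : ZMod p, ‖ftR p (fun n => nu p K b n / S) a‖
        = R p K b a / S := by
      intro a
      rw [hbridge a, Complex.norm_real, Real.norm_eq_abs,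
        _root_.abs_of_nonneg (div_nonneg (R_nonneg K b a) hSpos.le)]
    rw [Finset.sum_congr rfl fun a _ => habs a, ← Finset.sum_div, sum_R K hKp b]
    have hKR : (0 : ℝ) < (K : ℝ) := hKpos
    have step1 : (p : ℝ) * (K : ℝ) ^ t / S
        ≤ (p : ℝ) * (K : ℝ) ^ t / ((1 / (p : ℝ)) ^ t * ((K : ℝ) ^ 2) ^ t * p) := by
      gcongr
    have step2 : (p : ℝ) * (K : ℝ) ^ t / ((1 / (p : ℝ)) ^ t * ((K : ℝ) ^ 2) ^ t * p)
        = ((p : ℝ) / (K : ℝ)) ^ t := by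
      rw [div_pow]
      field_simp
      have hKt : (K : ℝ) ^ t ≠ 0 := by positivity
      rw [one_pow, div_pow, one_mul, ← pow_mul, pow_mul', sq, mul_assoc, mul_div_cancel₀ _ hKt]
    have step3 : ((p : ℝ) / (K : ℝ)) ^ t ≤ (6 / ε) ^ t := by
      refine pow_le_pow_left₀ (by positivity) ?_ t
      rw [div_le_div_iff₀ hKR hε]
      linarith
    calc (p : ℝ) * (K : ℝ) ^ t / S
        ≤ (p : ℝ) * (K : ℝ) ^ t / ((1 / (p : ℝ)) ^ t * ((K : ℝ) ^ 2) ^ t * p) := step1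
      _ = ((p : ℝ) / (K : ℝ)) ^ t := step2
      _ ≤ (6 / ε) ^ t := step3
end

section
/- There exists p₀ such that for every prime p > p₀ and every subset S ⊆ ℤ/pℤ with p/3 < |S| < 2p/5, one has Σ_{n ∈ ℤ/pℤ} r(n)² < 0.856·|S|³, where r(n) denotes the number of pairs (s₁, s₂) ∈ S × S with s₁ + s₂ = n in ℤ/pℤ. -/
open Finset

/-- `r(n)`: the number of pairs `(s₁, s₂) ∈ S × S` with `s₁ + s₂ = n` in `ℤ/p`. -/
def rep {p : ℕ} (S : Finset (ZMod p)) (n : ZMod p) : ℕ :=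
  ((S ×ˢ S).filter (fun q => q.1 + q.2 = n)).card

namespace SumSqAux

open scoped Pointwise

variable {p : ℕ} [NeZero p]

/-- the number of pairs `(a, b) ∈ S × S` with `a - b = x`, counted via `a ∈ S ∩ (S + x)`. -/
def cnt (S : Finset (ZMod p)) (x : ZMod p) : ℕ :=
  (Finset.univ.filter (fun a => a ∈ S ∧ a - x ∈ S)).card

lemma cnt_eq_sum (S : Finset (ZMod p)) (x : ZMod p) :
    cnt S x = ∑ a : ZMod p, (if a ∈ S ∧ a - x ∈ S then 1 else 0) := by
  rw [cnt, card_filter]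

lemma cnt_le (S : Finset (ZMod p)) (x : ZMod p) : cnt S x ≤ S.card := by
  apply card_le_card
  intro a ha
  exact (mem_filter.mp ha).2.1

lemma cnt_zero (S : Finset (ZMod p)) : cnt S 0 = S.card := by
  unfold cnt
  congr 1
  ext a
  simp

lemma sum_cnt (S : Finset (ZMod p)) : ∑ x : ZMod p, cnt S x = S.card * S.card := by
  simp_rw [cnt_eq_sum]
  rw [Finset.sum_comm]
  have h1 : ∀ a : ZMod p, (∑ x : ZMod p, if a ∈ S ∧ a - x ∈ S then (1:ℕ) else 0)
      = if a ∈ S then S.card else 0 := by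
    intro a
    by_cases ha : a ∈ S
    · simp only [ha, true_and, if_true]
      calc (∑ x : ZMod p, if a - x ∈ S then (1:ℕ) else 0)
          = ∑ y : ZMod p, (if y ∈ S then (1:ℕ) else 0) :=
            Fintype.sum_equiv (Equiv.subLeft a) _ _ (fun x => by simp)
        _ = S.card := by rw [← card_filter]; congr 1; exact filter_univ_mem S
    · simp [ha]
  rw [Finset.sum_congr rfl (fun a _ => h1 a)]
  rw [Finset.sum_ite_mem]
  simp [Finset.univ_inter]

lemma cnt_subadd (S : Finset (ZMod p)) (x y : ZMod p) :
    cnt S x + cnt S y ≤ S.card + cnt S (x + y) := by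
  have hy : cnt S y = ∑ a : ZMod p, (if a - x ∈ S ∧ a - x - y ∈ S then (1:ℕ) else 0) := by
    rw [cnt_eq_sum]
    exact (Fintype.sum_equiv (Equiv.subRight x) _ _ (fun a => by simp)).symm
  have hm : S.card = ∑ a : ZMod p, (if a - x ∈ S then (1:ℕ) else 0) := by
    calc S.card = ∑ y : ZMod p, (if y ∈ S then (1:ℕ) else 0) := by
          rw [← card_filter]; congr 1; exact (filter_univ_mem S).symm
      _ = ∑ a : ZMod p, (if a - x ∈ S then (1:ℕ) else 0) :=
          (Fintype.sum_equiv (Equiv.subRight x) _ _ (fun a => by simp)).symm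
  rw [cnt_eq_sum S x, hy, hm, cnt_eq_sum S (x+y), ← Finset.sum_add_distrib,
    ← Finset.sum_add_distrib]
  apply Finset.sum_le_sum
  intro a _
  have hxy : a - x - y = a - (x + y) := by ring
  rw [hxy]
  by_cases h1 : a ∈ S <;> by_cases h2 : a - x ∈ S <;> by_cases h3 : a - (x+y) ∈ S <;>
    simp [h1, h2, h3]

variable (S : Finset (ZMod p))

/-- level sets of the (subadditive) codegree function `S.card - cnt S ·`. -/
def Aset (T : ℕ) : Finset (ZMod p) := univ.filter (fun x => S.card ≤ cnt S x + T)
def aa (T : ℕ) : ℕ := (Aset S T).card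
def bb (T : ℕ) : ℕ := aa S T - 1
def BB (U : ℕ) : ℕ := ∑ T ∈ Finset.range (U+1), bb S T

lemma zero_mem_Aset (T : ℕ) : (0 : ZMod p) ∈ Aset S T := by
  simp [Aset, cnt_zero]

lemma one_le_aa (T : ℕ) : 1 ≤ aa S T :=
  card_pos.mpr ⟨0, zero_mem_Aset S T⟩

lemma aa_le_p (T : ℕ) : aa S T ≤ p := by
  have := card_le_univ (Aset S T)
  rwa [ZMod.card] at this

lemma aa_mono {T T' : ℕ} (h : T ≤ T') : aa S T ≤ aa S T' := by
  apply card_le_card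
  intro x hx
  simp only [Aset, mem_filter, mem_univ, true_and] at hx ⊢
  omega

lemma Aset_add_subset (T T' : ℕ) : Aset S T + Aset S T' ⊆ Aset S (T + T') := by
  intro z hz
  rw [Finset.mem_add] at hz
  obtain ⟨x, hx, y, hy, rfl⟩ := hz
  simp only [Aset, mem_filter, mem_univ, true_and] at hx hy ⊢
  have := cnt_subadd S x y
  omega

lemma pairing (hp : p.Prime) {L T : ℕ} (hT : T ≤ L) (hL : aa S L < p) :
    aa S T + aa S (L - T) ≤ aa S L + 1 := by
  have hne : (Aset S T).Nonempty := ⟨0, zero_mem_Aset S T⟩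
  have hne' : (Aset S (L - T)).Nonempty := ⟨0, zero_mem_Aset S (L - T)⟩
  have hcd := ZMod.cauchy_davenport hp hne hne'
  have hsub : Aset S T + Aset S (L - T) ⊆ Aset S L := by
    have h := Aset_add_subset S T (L - T)
    rwa [show T + (L - T) = L from by omega] at h
  have hcard : (Aset S T + Aset S (L - T)).card ≤ aa S L := card_le_card hsub
  have h1 := one_le_aa S T
  have h2 := one_le_aa S (L - T)
  rw [min_le_iff] at hcd
  rcases hcd with h | h
  · omega
  · unfold aa at *; omega

lemma pair_sum (hp : p.Prime) {L : ℕ} (hL : aa S L < p) :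
    2 * BB S L ≤ (L + 1) * bb S L := by
  have hrefl : ∑ T ∈ Finset.range (L+1), bb S (L - T) = ∑ T ∈ Finset.range (L+1), bb S T := by
    have := Finset.sum_range_reflect (fun T => bb S T) (L+1)
    simpa using this
  have h2 : 2 * BB S L = ∑ T ∈ Finset.range (L+1), (bb S T + bb S (L - T)) := by
    rw [Finset.sum_add_distrib, hrefl, BB]; ring
  rw [h2]
  calc ∑ T ∈ Finset.range (L+1), (bb S T + bb S (L - T))
      ≤ ∑ _T ∈ Finset.range (L+1), bb S L := by
        apply Finset.sum_le_sum
        intro T hT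
        rw [Finset.mem_range] at hT
        have hp1 := pairing S hp (by omega : T ≤ L) hL
        have := one_le_aa S T
        have := one_le_aa S (L - T)
        have := one_le_aa S L
        unfold bb
        omega
    _ = (L + 1) * bb S L := by rw [Finset.sum_const, Finset.card_range]; ring

lemma rec_step (hp : p.Prime) {L : ℕ} (hL : aa S (L+1) < p) :
    (L + 2) * BB S L ≤ L * BB S (L+1) := by
  have h1 := pair_sum S hp hL
  have h2 : BB S (L+1) = BB S L + bb S (L+1) := by
    rw [BB, BB, Finset.sum_range_succ]
  rw [h2] at h1 ⊢
  nlinarith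

lemma bb_zero (hp : p.Prime) (h0 : aa S 0 < p) : bb S 0 = 0 := by
  have h := pairing S hp (le_refl 0) h0
  rw [Nat.sub_self] at h
  have := one_le_aa S 0
  unfold bb
  omega

lemma telescope (hp : p.Prime) :
    ∀ L, aa S L < p → ∀ U, U ≤ L → BB S U * (L * (L+1)) ≤ BB S L * (U * (U+1)) := by
  intro L
  induction L with
  | zero =>
    intro _ U hU
    interval_cases U
    exact le_refl _
  | succ L ih =>
    intro hL U hU
    have hL' : aa S L < p := lt_of_le_of_lt (aa_mono S (Nat.le_succ L)) hL
    rcases Nat.eq_or_lt_of_le hU with rfl | hUlt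
    · exact le_of_eq (by ring)
    · have hU' : U ≤ L := by omega
      have ihU := ih hL' U hU'
      have hrec := rec_step S hp hL
      rcases Nat.eq_zero_or_pos L with rfl | hLpos
      · have h0 : aa S 0 < p := hL'
        have hB0 : BB S 0 = 0 := by
          rw [BB]; simp [bb_zero S hp h0]
        interval_cases U
        simp [hB0]
      · have key : L * (BB S U * ((L+1) * (L+2))) ≤ L * (BB S (L+1) * (U * (U+1))) := by
          calc L * (BB S U * ((L+1) * (L+2)))
              = (BB S U * (L * (L+1))) * (L+2) := by ring
            _ ≤ (BB S L * (U * (U+1))) * (L+2) := Nat.mul_le_mul_right _ ihU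
            _ = ((L+2) * BB S L) * (U * (U+1)) := by ring
            _ ≤ (L * BB S (L+1)) * (U * (U+1)) := Nat.mul_le_mul_right _ hrec
            _ = L * (BB S (L+1) * (U * (U+1))) := by ring
        exact Nat.le_of_mul_le_mul_left key hLpos

-- elementary sums
lemma sum_range_odd (n : ℕ) : ∑ j ∈ Finset.range n, (2*j+1) = n*n := by
  induction n with
  | zero => simp
  | succ n ih => rw [Finset.sum_range_succ, ih]; ring

lemma sum_range_mul_succ (n : ℕ) :
    3 * ∑ U ∈ Finset.range n, U*(U+1) = (n-1)*n*(n+1) := by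
  induction n with
  | zero => simp
  | succ n ih =>
    rw [Finset.sum_range_succ, Nat.mul_add, ih]
    cases n with
    | zero => simp
    | succ k => simp only [Nat.add_sub_cancel]; ring

lemma sum_range_succ_id (s : ℕ) : 2 * ∑ j ∈ Finset.range s, (j+1) = s*(s+1) := by
  induction s with
  | zero => simp
  | succ s ih => rw [Finset.sum_range_succ, Nat.mul_add, ih]; ring

lemma aa_card_filter (T : ℕ) :
    aa S T = ∑ x : ZMod p, (if S.card ≤ cnt S x + T then (1:ℕ) else 0) := by
  rw [aa, Aset, card_filter]

lemma budget : ∑ T ∈ Finset.range S.card, aa S T = S.card * S.card := by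
  simp_rw [aa_card_filter]
  rw [Finset.sum_comm]
  rw [← sum_cnt S]
  apply Finset.sum_congr rfl
  intro x _
  rw [← card_filter]
  have hc := cnt_le S x
  have h : (Finset.range S.card).filter (fun T => S.card ≤ cnt S x + T)
      = Finset.Ico (S.card - cnt S x) S.card := by
    ext t
    simp only [mem_filter, mem_range, mem_Ico]
    omega
  rw [h, Nat.card_Ico]
  omega

lemma budget_bb : (∑ T ∈ Finset.range S.card, bb S T) + S.card = S.card * S.card := by
  have h : ∑ T ∈ Finset.range S.card, aa S T
      = (∑ T ∈ Finset.range S.card, bb S T) + ∑ _T ∈ Finset.range S.card, 1 := by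
    rw [← Finset.sum_add_distrib]
    apply Finset.sum_congr rfl
    intro T _
    have := one_le_aa S T
    unfold bb
    omega
  have hb := budget S
  rw [h] at hb
  simpa using hb

lemma sum_BB_eq (N : ℕ) :
    ∑ U ∈ Finset.range N, BB S U = ∑ T ∈ Finset.range N, (N - T) * bb S T := by
  induction N with
  | zero => simp
  | succ N ih =>
    rw [Finset.sum_range_succ, ih, BB,
      Finset.sum_range_succ (fun T => (N + 1 - T) * bb S T) N,
      Finset.sum_range_succ (fun T => bb S T) N]
    have h2 : N + 1 - N = 1 := by omega
    rw [h2, one_mul]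
    have h3 : ∑ T ∈ Finset.range N, (N - T) * bb S T + ∑ T ∈ Finset.range N, bb S T
        = ∑ T ∈ Finset.range N, (N + 1 - T) * bb S T := by
      rw [← Finset.sum_add_distrib]
      apply Finset.sum_congr rfl
      intro T hT
      rw [Finset.mem_range] at hT
      have h1 : N + 1 - T = (N - T) + 1 := by omega
      rw [h1, Nat.succ_mul]
    omega

lemma sq_le :
    ∑ x : ZMod p, (cnt S x)^2 ≤ 2 * (∑ U ∈ Finset.range S.card, BB S U) + S.card * S.card := by
  set m := S.card with hmdef
  have step1 : ∀ x : ZMod p,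
      (cnt S x)^2 = ∑ j ∈ Finset.range m, (if j < cnt S x then (2*j+1) else 0) := by
    intro x
    rw [← Finset.sum_filter]
    have h : (Finset.range m).filter (fun j => j < cnt S x) = Finset.range (cnt S x) := by
      ext j
      have := cnt_le S x
      simp only [mem_filter, mem_range]
      omega
    rw [h, sum_range_odd, sq]
  simp_rw [step1]
  rw [Finset.sum_comm]
  have step2 : ∀ j ∈ Finset.range m,
      (∑ x : ZMod p, if j < cnt S x then (2*j+1) else 0) = (2*j+1) * aa S (m - 1 - j) := by
    intro j hj
    rw [Finset.mem_range] at hj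
    rw [Finset.sum_ite, Finset.sum_const, Finset.sum_const_zero, add_zero, smul_eq_mul]
    have h : Finset.univ.filter (fun x => j < cnt S x) = Aset S (m - 1 - j) := by
      ext x
      have := cnt_le S x
      simp only [mem_filter, mem_univ, true_and, Aset]
      omega
    rw [h, mul_comm]
    rfl
  rw [Finset.sum_congr rfl step2]
  have refl1 : ∑ j ∈ Finset.range m, (2*j+1) * aa S (m - 1 - j)
      = ∑ T ∈ Finset.range m, (2*(m-1-T)+1) * aa S T := by
    rw [← Finset.sum_range_reflect (fun j => (2*j+1) * aa S (m - 1 - j)) m]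
    apply Finset.sum_congr rfl
    intro T hT
    rw [Finset.mem_range] at hT
    congr 2 <;> omega
  rw [refl1]
  have split : ∀ T ∈ Finset.range m,
      (2*(m-1-T)+1) * aa S T ≤ 2*(m-T) * bb S T + (2*(m-1-T)+1) := by
    intro T hT
    rw [Finset.mem_range] at hT
    have h1 := one_le_aa S T
    have h : aa S T = bb S T + 1 := by unfold bb; omega
    rw [h]
    have hco : (2*(m-1-T)+1) ≤ 2*(m-T) := by omega
    calc (2*(m-1-T)+1) * (bb S T + 1) = (2*(m-1-T)+1) * bb S T + (2*(m-1-T)+1) := by ring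
      _ ≤ 2*(m-T) * bb S T + (2*(m-1-T)+1) :=
          Nat.add_le_add_right (Nat.mul_le_mul_right _ hco) _
  calc ∑ T ∈ Finset.range m, (2*(m-1-T)+1) * aa S T
      ≤ ∑ T ∈ Finset.range m, (2*(m-T) * bb S T + (2*(m-1-T)+1)) := Finset.sum_le_sum split
    _ = 2 * (∑ T ∈ Finset.range m, (m-T) * bb S T) + ∑ T ∈ Finset.range m, (2*(m-1-T)+1) := by
        rw [Finset.sum_add_distrib, Finset.mul_sum]
        congr 1
        apply Finset.sum_congr rfl
        intro T _
        ring
    _ = 2 * (∑ U ∈ Finset.range m, BB S U) + S.card * S.card := by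
        rw [← sum_BB_eq]
        congr 1
        have h : ∑ T ∈ Finset.range m, (2*(m-1-T)+1)
            = ∑ T ∈ Finset.range m, (2*T+1) :=
          Finset.sum_range_reflect (fun j => 2*j+1) m
        rw [h, sum_range_odd]

lemma natfin (m s l q β E : ℕ) (hβ : β + s*q + m = m*m) (hE : 2*E = s*(s+1))
    (hq : 2*m ≤ q) (h4 : l + s = m) (h5 : 1 ≤ s) (h6 : s+1 ≤ m) (h8 : 2 ≤ m) :
    β*(l+1) + 3*(s*β + q*E) ≤ m^3 := by
  zify at hβ hE hq h4 h5 h6 h8 ⊢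
  nlinarith [mul_nonneg (sub_nonneg.2 hq) (by positivity : (0:ℤ) ≤ (s:ℤ)),
    mul_nonneg (mul_nonneg (by positivity : (0:ℤ) ≤ (q:ℤ)) (by positivity : (0:ℤ) ≤ (s:ℤ)))
      (by positivity : (0:ℤ) ≤ (s:ℤ)),
    mul_nonneg (mul_nonneg (by positivity : (0:ℤ) ≤ (m:ℤ)) (by positivity : (0:ℤ) ≤ (s:ℤ)))
      (by positivity : (0:ℤ) ≤ (s:ℤ)),
    mul_nonneg (mul_nonneg (sub_nonneg.2 hq) (by positivity : (0:ℤ) ≤ (s:ℤ)))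
      (by positivity : (0:ℤ) ≤ (m:ℤ)),
    (by positivity : (0:ℤ) ≤ (β:ℤ))]

/-- summed telescoped bound below a level where `aa < p`. -/
lemma part1 (hp : p.Prime) {l : ℕ} (hl1 : 1 ≤ l) (hl : aa S (l-1) < p) :
    3 * ∑ U ∈ Finset.range l, BB S U ≤ BB S (l-1) * (l+1) := by
  have htel := telescope S hp (l-1) hl
  have hsum : (∑ U ∈ Finset.range l, BB S U) * ((l-1) * l)
      ≤ BB S (l-1) * ∑ U ∈ Finset.range l, U*(U+1) := by
    rw [Finset.sum_mul, Finset.mul_sum]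
    apply Finset.sum_le_sum
    intro U hU
    rw [Finset.mem_range] at hU
    have h := htel U (by omega)
    have he : (l-1) * ((l-1) + 1) = (l-1) * l := by
      congr 1
      omega
    rw [he] at h
    exact h
  rcases Nat.lt_or_ge l 2 with h2 | h2
  · have hl01 : l = 1 := by omega
    subst hl01
    simp only [Finset.range_one, Finset.sum_singleton]
    have hb0 : BB S 0 = 0 := by
      rw [BB]
      simp [bb_zero S hp (by simpa using hl)]
    simp [hb0]
  · have h3 : (3 * ∑ U ∈ Finset.range l, BB S U) * ((l-1) * l)
        ≤ (BB S (l-1) * (l+1)) * ((l-1) * l) := by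
      calc (3 * ∑ U ∈ Finset.range l, BB S U) * ((l-1) * l)
          = 3 * ((∑ U ∈ Finset.range l, BB S U) * ((l-1) * l)) := by ring
        _ ≤ 3 * (BB S (l-1) * ∑ U ∈ Finset.range l, U*(U+1)) := Nat.mul_le_mul_left _ hsum
        _ = BB S (l-1) * (3 * ∑ U ∈ Finset.range l, U*(U+1)) := by ring
        _ = BB S (l-1) * ((l-1)*l*(l+1)) := by rw [sum_range_mul_succ l]
        _ = (BB S (l-1) * (l+1)) * ((l-1) * l) := by ring
    have hpos : 0 < (l-1) * l := by
      apply Nat.mul_pos <;> omega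
    exact Nat.le_of_mul_le_mul_right h3 hpos

theorem main_bound (hp : p.Prime) (hm : 2 ≤ S.card) (hmp : 2 * S.card < p) :
    3 * ∑ U ∈ Finset.range S.card, BB S U ≤ S.card ^ 3 := by
  set m := S.card with hmdef
  by_cases hcap : aa S (m-1) < p
  · have h1 := part1 S hp (by omega : 1 ≤ m) hcap
    have hBlast : BB S (m-1) + m = m * m := by
      have := budget_bb S
      rw [BB, show m - 1 + 1 = m by omega]
      exact this
    have h2 : BB S (m-1) * (m+1) ≤ m^3 := by
      nlinarith [hBlast, hm]
    omega
  · push_neg at hcap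
    have hcapeq : aa S (m-1) = p := le_antisymm (aa_le_p S _) hcap
    have hex : ∃ L, aa S L = p := ⟨m-1, hcapeq⟩
    set l := Nat.find hex with hldef
    have hlp : aa S l = p := Nat.find_spec hex
    have hlmin : ∀ k, k < l → aa S k < p := by
      intro k hk
      have := Nat.find_min hex hk
      have := aa_le_p S k
      omega
    have hlle : l ≤ m - 1 := Nat.find_le hcapeq
    have hl1 : 1 ≤ l := by
      by_contra h0
      have hl0 : l = 0 := by omega
      have hall : ∀ T ∈ Finset.range m, p ≤ aa S T := by
        intro T _
        calc p = aa S l := hlp.symm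
          _ ≤ aa S T := by rw [hl0]; exact aa_mono S (Nat.zero_le T)
      have hsum : m * p ≤ ∑ T ∈ Finset.range m, aa S T := by
        calc m * p = ∑ _T ∈ Finset.range m, p := by
              rw [Finset.sum_const, Finset.card_range, smul_eq_mul]
          _ ≤ _ := Finset.sum_le_sum hall
      rw [budget S] at hsum
      nlinarith
    have hs1 : 1 ≤ m - l := by omega
    have haT : ∀ T, l ≤ T → aa S T = p := by
      intro T hT
      have h1 := aa_mono S hT
      have h2 := aa_le_p S T
      omega
    have hbT : ∀ T, l ≤ T → bb S T = p - 1 := by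
      intro T hT
      rw [bb, haT T hT]
    have e1 : BB S (l-1) = ∑ T ∈ Finset.Ico 0 l, bb S T := by
      rw [BB, show l - 1 + 1 = l by omega, Finset.range_eq_Ico]
    have e2 : ∑ T ∈ Finset.Ico l m, bb S T = (m - l) * (p-1) := by
      rw [Finset.sum_congr rfl (fun T hT => hbT T (Finset.mem_Ico.mp hT).1),
        Finset.sum_const, Nat.card_Ico, smul_eq_mul]
    have hsplitb : ∑ T ∈ Finset.range m, bb S T
        = BB S (l-1) + (m - l) * (p-1) := by
      rw [Finset.range_eq_Ico, ← Finset.sum_Ico_consecutive _ (Nat.zero_le l) (by omega : l ≤ m),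
        ← e1, e2]
    have hβ : BB S (l-1) + (m - l) * (p-1) + m = m * m := by
      rw [← hsplitb]; exact budget_bb S
    have hBBabove : ∀ U, l ≤ U → U < m → BB S U = BB S (l-1) + (U + 1 - l) * (p-1) := by
      intro U hU hUm
      have e3 : ∑ T ∈ Finset.Ico l (U+1), bb S T = (U + 1 - l) * (p-1) := by
        rw [Finset.sum_congr rfl (fun T hT => hbT T (Finset.mem_Ico.mp hT).1),
          Finset.sum_const, Nat.card_Ico, smul_eq_mul]
      rw [BB, Finset.range_eq_Ico,
        ← Finset.sum_Ico_consecutive _ (Nat.zero_le l) (by omega : l ≤ U + 1), ← e1, e3]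
    have hsplitBB : ∑ U ∈ Finset.range m, BB S U
        = (∑ U ∈ Finset.range l, BB S U) + ∑ U ∈ Finset.Ico l m, BB S U := by
      rw [Finset.range_eq_Ico, ← Finset.sum_Ico_consecutive _ (Nat.zero_le l) (by omega : l ≤ m),
        Finset.range_eq_Ico]
    have hIco : ∑ U ∈ Finset.Ico l m, BB S U
        = (m - l) * BB S (l-1) + (p-1) * ∑ j ∈ Finset.range (m - l), (j+1) := by
      have e4 : ∀ U ∈ Finset.Ico l m, BB S U = BB S (l-1) + (U + 1 - l) * (p-1) := fun U hU => by
        rw [Finset.mem_Ico] at hU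
        exact hBBabove U hU.1 hU.2
      calc ∑ U ∈ Finset.Ico l m, BB S U
          = ∑ U ∈ Finset.Ico l m, (BB S (l-1) + (U + 1 - l) * (p-1)) := Finset.sum_congr rfl e4
        _ = (∑ _U ∈ Finset.Ico l m, BB S (l-1)) + ∑ U ∈ Finset.Ico l m, (U + 1 - l) * (p-1) :=
            Finset.sum_add_distrib
        _ = (m - l) * BB S (l-1) + (p-1) * ∑ U ∈ Finset.Ico l m, (U + 1 - l) := by
            rw [Finset.sum_const, Nat.card_Ico, smul_eq_mul, Finset.mul_sum]
            congr 1
            exact Finset.sum_congr rfl (fun U _ => mul_comm _ _)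
        _ = (m - l) * BB S (l-1) + (p-1) * ∑ j ∈ Finset.range (m - l), (j+1) := by
            congr 1
            rw [Finset.mul_sum, Finset.mul_sum, Finset.sum_Ico_eq_sum_range]
            exact Finset.sum_congr rfl (fun j _ => by rw [show l + j + 1 - l = j + 1 by omega])
    have hp1 := part1 S hp hl1 (hlmin (l-1) (by omega))
    have hE : 2 * ∑ j ∈ Finset.range (m - l), (j+1) = (m-l) * ((m-l)+1) :=
      sum_range_succ_id (m-l)
    have hfin := natfin m (m-l) l (p-1) (BB S (l-1)) (∑ j ∈ Finset.range (m - l), (j+1))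
      hβ hE (by omega) (by omega) hs1 (by omega) hm
    omega

/- ### the Fourier-free energy identity -/

def NF : ℕ := ∑ a : ZMod p, ∑ b : ZMod p, ∑ c : ZMod p,
  (if a ∈ S ∧ b ∈ S ∧ c ∈ S ∧ a + b - c ∈ S then (1:ℕ) else 0)

lemma rep_eq_sum (n : ZMod p) :
    rep S n = ∑ a : ZMod p, ∑ b : ZMod p, (if a ∈ S ∧ b ∈ S ∧ a + b = n then (1:ℕ) else 0) := by
  rw [rep, card_filter, Finset.sum_product]
  symm
  calc ∑ a : ZMod p, ∑ b : ZMod p, (if a ∈ S ∧ b ∈ S ∧ a + b = n then (1:ℕ) else 0)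
      = ∑ a : ZMod p, (if a ∈ S then (∑ b : ZMod p, if b ∈ S ∧ a + b = n then (1:ℕ) else 0)
          else 0) := by
        apply Finset.sum_congr rfl
        intro a _
        by_cases ha : a ∈ S <;> simp [ha]
    _ = ∑ a ∈ S, (∑ b : ZMod p, if b ∈ S ∧ a + b = n then (1:ℕ) else 0) := by
        rw [Finset.sum_ite_mem, Finset.univ_inter]
    _ = ∑ a ∈ S, ∑ b ∈ S, (if a + b = n then (1:ℕ) else 0) := by
        apply Finset.sum_congr rfl
        intro a _
        calc ∑ b : ZMod p, (if b ∈ S ∧ a + b = n then (1:ℕ) else 0)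
            = ∑ b : ZMod p, (if b ∈ S then (if a + b = n then (1:ℕ) else 0) else 0) := by
              apply Finset.sum_congr rfl
              intro b _
              by_cases hb : b ∈ S <;> simp [hb]
          _ = ∑ b ∈ S, (if a + b = n then (1:ℕ) else 0) := by
              rw [Finset.sum_ite_mem, Finset.univ_inter]
    _ = ∑ a ∈ S, ∑ b ∈ S, (if (a, b).1 + (a, b).2 = n then (1:ℕ) else 0) := rfl

lemma collapse1 (a b c d : ZMod p) :
    (∑ n : ZMod p, (if a ∈ S ∧ b ∈ S ∧ a + b = n then (1:ℕ) else 0) *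
      (if c ∈ S ∧ d ∈ S ∧ c + d = n then (1:ℕ) else 0))
    = if a ∈ S ∧ b ∈ S ∧ c ∈ S ∧ d ∈ S ∧ c + d = a + b then 1 else 0 := by
  have hpt : ∀ n : ZMod p, (if a ∈ S ∧ b ∈ S ∧ a + b = n then (1:ℕ) else 0) *
      (if c ∈ S ∧ d ∈ S ∧ c + d = n then (1:ℕ) else 0)
      = if n = a + b then (if a ∈ S ∧ b ∈ S ∧ c ∈ S ∧ d ∈ S ∧ c + d = a + b then (1:ℕ) else 0)
        else 0 := by
    intro n
    by_cases h5 : a + b = n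
    · subst h5
      simp only [if_pos rfl]
      split_ifs <;> simp_all
    · rw [if_neg (show ¬(a ∈ S ∧ b ∈ S ∧ a + b = n) from fun h => h5 h.2.2), zero_mul,
        if_neg (show ¬(n = a + b) from fun h => h5 h.symm)]
  rw [Finset.sum_congr rfl (fun n _ => hpt n), Finset.sum_ite_eq' Finset.univ (a+b)]
  simp

lemma collapse2 (a b c : ZMod p) :
    (∑ d : ZMod p, if a ∈ S ∧ b ∈ S ∧ c ∈ S ∧ d ∈ S ∧ c + d = a + b then (1:ℕ) else 0)
    = if a ∈ S ∧ b ∈ S ∧ c ∈ S ∧ a + b - c ∈ S then 1 else 0 := by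
  have hpt : ∀ d : ZMod p, (if a ∈ S ∧ b ∈ S ∧ c ∈ S ∧ d ∈ S ∧ c + d = a + b then (1:ℕ) else 0)
      = if d = a + b - c then (if a ∈ S ∧ b ∈ S ∧ c ∈ S ∧ a + b - c ∈ S then (1:ℕ) else 0)
        else 0 := by
    intro d
    by_cases h6 : d = a + b - c
    · subst h6
      have he : c + (a + b - c) = a + b := by ring
      simp only [if_pos rfl, he]
      split_ifs <;> simp_all
    · rw [if_neg, if_neg h6]
      rintro ⟨-, -, -, -, h7⟩
      exact h6 (by rw [← h7]; ring)
  rw [Finset.sum_congr rfl (fun d _ => hpt d), Finset.sum_ite_eq' Finset.univ (a+b-c)]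
  simp

lemma R1 : ∑ n : ZMod p, (rep S n)^2 = NF S := by
  have e1 : ∑ n : ZMod p, (rep S n)^2
      = ∑ n : ZMod p, ∑ a : ZMod p, ∑ c : ZMod p, ∑ b : ZMod p, ∑ d : ZMod p,
        (if a ∈ S ∧ b ∈ S ∧ a + b = n then (1:ℕ) else 0) *
        (if c ∈ S ∧ d ∈ S ∧ c + d = n then (1:ℕ) else 0) := by
    simp_rw [sq, rep_eq_sum, Finset.sum_mul_sum]
  have e2 : ∑ n : ZMod p, ∑ a : ZMod p, ∑ c : ZMod p, ∑ b : ZMod p, ∑ d : ZMod p,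
        (if a ∈ S ∧ b ∈ S ∧ a + b = n then (1:ℕ) else 0) *
        (if c ∈ S ∧ d ∈ S ∧ c + d = n then (1:ℕ) else 0)
      = ∑ a : ZMod p, ∑ c : ZMod p, ∑ b : ZMod p, ∑ d : ZMod p, ∑ n : ZMod p,
        (if a ∈ S ∧ b ∈ S ∧ a + b = n then (1:ℕ) else 0) *
        (if c ∈ S ∧ d ∈ S ∧ c + d = n then (1:ℕ) else 0) := by
    rw [Finset.sum_comm]
    apply Finset.sum_congr rfl
    intro a _
    rw [Finset.sum_comm]
    apply Finset.sum_congr rfl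
    intro c _
    rw [Finset.sum_comm]
    apply Finset.sum_congr rfl
    intro b _
    rw [Finset.sum_comm]
  have e3 : ∑ a : ZMod p, ∑ c : ZMod p, ∑ b : ZMod p, ∑ d : ZMod p, ∑ n : ZMod p,
        (if a ∈ S ∧ b ∈ S ∧ a + b = n then (1:ℕ) else 0) *
        (if c ∈ S ∧ d ∈ S ∧ c + d = n then (1:ℕ) else 0)
      = ∑ a : ZMod p, ∑ c : ZMod p, ∑ b : ZMod p,
        (if a ∈ S ∧ b ∈ S ∧ c ∈ S ∧ a + b - c ∈ S then (1:ℕ) else 0) := by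
    apply Finset.sum_congr rfl
    intro a _
    apply Finset.sum_congr rfl
    intro c _
    apply Finset.sum_congr rfl
    intro b _
    rw [Finset.sum_congr rfl (fun d _ => collapse1 S a b c d), collapse2 S a b c]
  rw [e1, e2, e3, NF]
  apply Finset.sum_congr rfl
  intro a _
  rw [Finset.sum_comm]

lemma collapse3 (a b : ZMod p) :
    (∑ x : ZMod p, (if a ∈ S ∧ a - x ∈ S then (1:ℕ) else 0) *
      (if b ∈ S ∧ b - x ∈ S then (1:ℕ) else 0))
    = ∑ v : ZMod p, (if b ∈ S ∧ v ∈ S ∧ a ∈ S ∧ b + v - a ∈ S then (1:ℕ) else 0) := by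
  apply Fintype.sum_equiv (Equiv.subLeft a)
  intro x
  simp only [Equiv.subLeft_apply]
  have h3 : b + (a - x) - a = b - x := by ring
  simp only [h3]
  split_ifs <;> simp_all

lemma R2 : ∑ x : ZMod p, (cnt S x)^2 = NF S := by
  have e1 : ∑ x : ZMod p, (cnt S x)^2
      = ∑ x : ZMod p, ∑ a : ZMod p, ∑ b : ZMod p,
        (if a ∈ S ∧ a - x ∈ S then (1:ℕ) else 0) *
        (if b ∈ S ∧ b - x ∈ S then (1:ℕ) else 0) := by
    simp_rw [sq, cnt_eq_sum, Finset.sum_mul_sum]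
  have e2 : ∑ x : ZMod p, ∑ a : ZMod p, ∑ b : ZMod p,
        (if a ∈ S ∧ a - x ∈ S then (1:ℕ) else 0) *
        (if b ∈ S ∧ b - x ∈ S then (1:ℕ) else 0)
      = ∑ a : ZMod p, ∑ b : ZMod p, ∑ x : ZMod p,
        (if a ∈ S ∧ a - x ∈ S then (1:ℕ) else 0) *
        (if b ∈ S ∧ b - x ∈ S then (1:ℕ) else 0) := by
    rw [Finset.sum_comm]
    apply Finset.sum_congr rfl
    intro a _
    rw [Finset.sum_comm]
  rw [e1, e2]
  have e3 : ∑ a : ZMod p, ∑ b : ZMod p, ∑ x : ZMod p,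
        (if a ∈ S ∧ a - x ∈ S then (1:ℕ) else 0) *
        (if b ∈ S ∧ b - x ∈ S then (1:ℕ) else 0)
      = ∑ a : ZMod p, ∑ b : ZMod p, ∑ v : ZMod p,
        (if b ∈ S ∧ v ∈ S ∧ a ∈ S ∧ b + v - a ∈ S then (1:ℕ) else 0) := by
    apply Finset.sum_congr rfl
    intro a _
    apply Finset.sum_congr rfl
    intro b _
    exact collapse3 S a b
  rw [e3, NF]
  rw [Finset.sum_comm]
  apply Finset.sum_congr rfl
  intro b _
  rw [Finset.sum_comm]

lemma sum_range_eq_sum_univ (f : ZMod p → ℕ) :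
    ∑ n ∈ Finset.range p, f (n : ZMod p) = ∑ x : ZMod p, f x := by
  refine Finset.sum_nbij' (fun n => (n : ZMod p)) (fun x => x.val) ?_ ?_ ?_ ?_ ?_
  · intro a _
    exact Finset.mem_univ _
  · intro x _
    rw [Finset.mem_range]
    exact ZMod.val_lt x
  · intro a ha
    rw [Finset.mem_range] at ha
    exact ZMod.val_natCast_of_lt ha
  · intro x _
    exact ZMod.natCast_rightInverse x
  · intro a _
    rfl

end SumSqAux

theorem sum_sq_representations_lt :
    ∃ p₀ : ℕ, ∀ p : ℕ, p.Prime → p₀ < p →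
      ∀ S : Finset (ZMod p),
        (p : ℝ) / 3 < S.card → (S.card : ℝ) < 2 * p / 5 →
        (∑ n ∈ Finset.range p, (rep S (n : ZMod p) : ℝ) ^ 2) <
          0.856 * (S.card : ℝ) ^ 3 := by
  use 100
  intro p hp hpp S h1 h2
  haveI : NeZero p := ⟨hp.ne_zero⟩
  set m := S.card with hmdef
  have hm3 : p < 3 * m := by
    have h : (p : ℝ) < 3 * m := by linarith
    exact_mod_cast h
  have hm5 : 5 * m < 2 * p := by
    have h : (5 : ℝ) * m < 2 * p := by linarith
    exact_mod_cast h
  have hm2 : 2 ≤ m := by omega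
  have hmp : 2 * m < p := by omega
  have hm34 : 34 ≤ m := by omega
  -- the natural-number energy bound
  have key1 : ∑ n ∈ Finset.range p, (rep S (n : ZMod p))^2 = ∑ x : ZMod p, (SumSqAux.cnt S x)^2 := by
    rw [SumSqAux.sum_range_eq_sum_univ (fun n => (rep S n)^2), SumSqAux.R1, SumSqAux.R2]
  have key2 : 3 * (∑ x : ZMod p, (SumSqAux.cnt S x)^2) ≤ 2 * m^3 + 3 * (m * m) := by
    have ha := SumSqAux.sq_le S
    have hb := SumSqAux.main_bound S hp hm2 hmp
    simp only [← hmdef] at ha hb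
    calc 3 * (∑ x : ZMod p, (SumSqAux.cnt S x)^2)
        ≤ 3 * (2 * (∑ U ∈ Finset.range m, SumSqAux.BB S U) + m * m) := by
          exact Nat.mul_le_mul_left _ ha
      _ = 2 * (3 * ∑ U ∈ Finset.range m, SumSqAux.BB S U) + 3 * (m * m) := by ring
      _ ≤ 2 * m^3 + 3 * (m * m) := by
          have := Nat.mul_le_mul_left 2 hb
          omega
  rw [← key1] at key2
  -- move to the reals
  have hcast : (∑ n ∈ Finset.range p, (rep S (n : ZMod p) : ℝ) ^ 2)
      = ((∑ n ∈ Finset.range p, (rep S (n : ZMod p))^2 : ℕ) : ℝ) := by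
    push_cast
    rfl
  rw [hcast]
  have hkey : 3 * ((∑ n ∈ Finset.range p, (rep S (n : ZMod p))^2 : ℕ) : ℝ)
      ≤ 2 * (m : ℝ)^3 + 3 * ((m : ℝ) * m) := by
    exact_mod_cast key2
  have hm34R : (34 : ℝ) ≤ (m : ℝ) := by exact_mod_cast hm34
  nlinarith [hkey, hm34R]
end
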